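/- Let λ = n·(1 − a/B)^{n−1}/(n − 1 − 1/(n−1) + log(B/L)) and, for v ∈ (L, B), define h_v(z) = v·Q*'(v)·(1 − zⁿ) + Q*(v)·(1 − n·z^{n−1} + (n−1)·zⁿ) − λ·(1 − z) for z ∈ ℝ, where Q*' denotes the derivative of Q* on (L, B). Then for every v ∈ (L, B) and every z ∈ [0, 1]: h_v(1 − a/v) ≤ h_v(z). -/

import Mathlib

private lemma fact1 (m : ℕ) (z s : ℝ) :
    (m:ℝ) * z ^ (m+1) - ((m:ℝ)+1) * s * z ^ m + s ^ (m+1)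
      = (z - s)^2 * ∑ k ∈ Finset.range m, ((k:ℝ)+1) * z ^ k * s ^ (m-1-k) := by
  induction m with
  | zero => simp
  | succ m ih =>
    rw [Finset.sum_range_succ]
    have h1 : ∀ k ∈ Finset.range m, ((k:ℝ)+1) * z ^ k * s ^ (m+1-1-k)
        = s * (((k:ℝ)+1) * z ^ k * s ^ (m-1-k)) := by
      intro k hk
      rw [Finset.mem_range] at hk
      rw [show m+1-1-k = (m-1-k)+1 by omega, pow_succ]
      ring
    rw [Finset.sum_congr rfl h1, ← Finset.mul_sum,
      show m+1-1-m = 0 by omega]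
    push_cast
    linear_combination s * ih

private lemma fact2 (m : ℕ) (z s : ℝ) :
    z ^ (m+1) - ((m:ℝ)+1) * s ^ m * z + (m:ℝ) * s ^ (m+1)
      = (z - s)^2 * ∑ k ∈ Finset.range m, ((m:ℝ)-(k:ℝ)) * z ^ k * s ^ (m-1-k) := by
  induction m with
  | zero => simp
  | succ m ih =>
    rw [Finset.sum_range_succ']
    have h1 : ∀ k ∈ Finset.range m, ((↑(m+1):ℝ)-(↑(k+1):ℝ)) * z ^ (k+1) * s ^ (m+1-1-(k+1))
        = z * (((m:ℝ)-(k:ℝ)) * z ^ k * s ^ (m-1-k)) := by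
      intro k hk
      rw [Finset.mem_range] at hk
      rw [show m+1-1-(k+1) = m-1-k by omega]
      push_cast
      ring
    rw [Finset.sum_congr rfl h1, ← Finset.mul_sum,
      show m+1-1-0 = m by omega]
    push_cast
    linear_combination z * ih

private lemma key (m : ℕ) (z s T : ℝ) (hz : 0 ≤ z) (hs : 0 ≤ s)
    (hT : (m:ℝ) * s ≤ T) :
    s * (z ^ (m+1) - ((m:ℝ)+1) * s ^ m * z + (m:ℝ) * s ^ (m+1))
      ≤ T * ((m:ℝ) * z ^ (m+1) - ((m:ℝ)+1) * s * z ^ m + s ^ (m+1)) := by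
  have hT0 : 0 ≤ T := le_trans (by positivity) hT
  rw [fact1, fact2]
  rw [show s * ((z-s)^2 * ∑ k ∈ Finset.range m, ((m:ℝ)-(k:ℝ)) * z ^ k * s ^ (m-1-k))
      = (z-s)^2 * (s * ∑ k ∈ Finset.range m, ((m:ℝ)-(k:ℝ)) * z ^ k * s ^ (m-1-k)) by ring]
  rw [show T * ((z-s)^2 * ∑ k ∈ Finset.range m, ((k:ℝ)+1) * z ^ k * s ^ (m-1-k))
      = (z-s)^2 * (T * ∑ k ∈ Finset.range m, ((k:ℝ)+1) * z ^ k * s ^ (m-1-k)) by ring]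
  apply mul_le_mul_of_nonneg_left _ (sq_nonneg (z-s))
  rw [Finset.mul_sum, Finset.mul_sum]
  apply Finset.sum_le_sum
  intro k hk
  rw [Finset.mem_range] at hk
  have hw : (0:ℝ) ≤ z ^ k * s ^ (m-1-k) := by positivity
  have hk1 : s * ((m:ℝ)-(k:ℝ)) ≤ T * ((k:ℝ)+1) := by
    have h1 : (0:ℝ) ≤ T * (k:ℝ) := mul_nonneg hT0 (Nat.cast_nonneg k)
    have h2 : (0:ℝ) ≤ s * (k:ℝ) := mul_nonneg hs (Nat.cast_nonneg k)
    nlinarith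
  calc s * (((m:ℝ)-(k:ℝ)) * z ^ k * s ^ (m-1-k))
      = (s * ((m:ℝ)-(k:ℝ))) * (z ^ k * s ^ (m-1-k)) := by ring
    _ ≤ (T * ((k:ℝ)+1)) * (z ^ k * s ^ (m-1-k)) := mul_le_mul_of_nonneg_right hk1 hw
    _ = T * (((k:ℝ)+1) * z ^ k * s ^ (m-1-k)) := by ring

private lemma bridge (j : ℕ) (nr c s T z A Q lam : ℝ)
    (hnr : nr = (j:ℝ) + 3) (hc : 0 < c) (hs0 : 0 < s) (hz : 0 ≤ z)
    (hT : (nr - 1) * s ≤ T)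
    (hA : A * s ^ (j+3) = c * (s - (nr - 1) * T * (1 - s)))
    (hQ : Q * s ^ (j+2) = c * T)
    (hlam : lam = nr * c) :
    A * (1 - s ^ (j+3)) + Q * (1 - nr * s ^ (j+2) + (nr - 1) * s ^ (j+3)) - lam * (1 - s)
      ≤ A * (1 - z ^ (j+3)) + Q * (1 - nr * z ^ (j+2) + (nr - 1) * z ^ (j+3)) - lam * (1 - z) := by
  have hkey := key (j+2) z s T hz hs0.le
    (by have h := hT; rw [hnr] at h; push_cast; linarith)
  push_cast at hkey
  subst hnr; subst hlam
  rw [← sub_nonneg]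
  have hsp : (0:ℝ) < s ^ (j+3) := pow_pos hs0 _
  have h3 : 0 ≤ (T * (((j:ℝ)+2) * z ^ (j+3) - (((j:ℝ)+2)+1) * s * z ^ (j+2) + s ^ (j+3))
          - s * (z ^ (j+3) - (((j:ℝ)+2)+1) * s ^ (j+2) * z + ((j:ℝ)+2) * s ^ (j+3))) * c := by
    apply mul_nonneg _ hc.le
    rw [sub_nonneg]
    convert hkey using 2 <;> ring_nf
  have hexp : (A * (1 - z ^ (j+3)) + Q * (1 - ((j:ℝ)+3) * z ^ (j+2) + ((j:ℝ)+3 - 1) * z ^ (j+3)) - ((j:ℝ)+3) * c * (1 - z)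
      - (A * (1 - s ^ (j+3)) + Q * (1 - ((j:ℝ)+3) * s ^ (j+2) + ((j:ℝ)+3 - 1) * s ^ (j+3)) - ((j:ℝ)+3) * c * (1 - s))) * s ^ (j+3)
      = (T * (((j:ℝ)+2) * z ^ (j+3) - (((j:ℝ)+2)+1) * s * z ^ (j+2) + s ^ (j+3))
          - s * (z ^ (j+3) - (((j:ℝ)+2)+1) * s ^ (j+2) * z + ((j:ℝ)+2) * s ^ (j+3))) * c := by
    linear_combination (s ^ (j+3) - z ^ (j+3)) * hA
      + (s * (((j:ℝ)+3) * (s ^ (j+2) - z ^ (j+2)) + ((j:ℝ)+2) * (z ^ (j+3) - s ^ (j+3)))) * hQ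
  rw [← hexp] at h3
  nlinarith [h3, hsp]

set_option maxHeartbeats 1000000 in
theorem lagrangian_integrand_min_n_bidders (n : ℕ) (hn : 3 ≤ n) (B μ L : ℝ)
    (hB : 0 < B) (hμ0 : 0 < μ) (hμB : μ < B)
    (hL : L ∈ Set.Ioc (0 : ℝ) B)
    (hLeq : ((n : ℝ) - 1 / ((n : ℝ) - 1) + Real.log (B / L)) * L = ((n : ℝ) - 1) ^ 2 * μ)
    (v₀ a : ℝ) (hv₀ : v₀ = L / ((n : ℝ) - 1)) (ha : a = L / ((n : ℝ) - 1) ^ 2)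
    (Qs : ℝ → ℝ)
    (hQs : ∀ r, Qs r = if r < L then
        (1 - a / B) ^ (n - 1) * (L / (L - a)) ^ (n - 1)
          * (((n : ℝ) - 1 - 1 / ((n : ℝ) - 1))
            / ((n : ℝ) - 1 - 1 / ((n : ℝ) - 1) + Real.log (B / L)))
      else (1 - a / B) ^ (n - 1) * (r / (r - a)) ^ (n - 1)
          * (((n : ℝ) - 1 - 1 / ((n : ℝ) - 1) + Real.log (r / L))
            / ((n : ℝ) - 1 - 1 / ((n : ℝ) - 1) + Real.log (B / L))))
    (lam : ℝ)
    (hlam : lam = (n : ℝ) * (1 - a / B) ^ (n - 1)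
      / ((n : ℝ) - 1 - 1 / ((n : ℝ) - 1) + Real.log (B / L)))
    (h : ℝ → ℝ → ℝ)
    (hh : ∀ v z, h v z = v * deriv Qs v * (1 - z ^ n)
      + Qs v * (1 - (n : ℝ) * z ^ (n - 1) + ((n : ℝ) - 1) * z ^ n) - lam * (1 - z)) :
    ∀ v ∈ Set.Ioo L B, ∀ z ∈ Set.Icc (0 : ℝ) 1, h v (1 - a / v) ≤ h v z := by
  obtain ⟨j, rfl⟩ : ∃ j, n = j + 3 := ⟨n - 3, by omega⟩
  obtain ⟨hL0, hLB⟩ := hL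
  simp only [show j + 3 - 1 = j + 2 by omega] at hQs hlam hh
  set K0 : ℝ := (↑(j+3) : ℝ) - 1 - 1 / ((↑(j+3) : ℝ) - 1) with hK0def
  set D0 : ℝ := K0 + Real.log (B / L) with hD0def
  -- numeric facts
  have hmr2 : (2:ℝ) ≤ (↑(j+3) : ℝ) - 1 := by
    have := Nat.cast_nonneg (α := ℝ) j; push_cast; linarith
  have hmr0 : (0:ℝ) < (↑(j+3) : ℝ) - 1 := by linarith
  have ha0 : 0 < a := by rw [ha]; exact div_pos hL0 (pow_pos hmr0 2)
  have haL : a < L := by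
    rw [ha, div_lt_iff₀ (pow_pos hmr0 2)]
    have h4 : (4:ℝ) ≤ ((↑(j+3) : ℝ) - 1) ^ 2 := by nlinarith [hmr2]
    nlinarith [hL0, h4]
  have hK0p : (0:ℝ) < K0 := by
    rw [hK0def]
    have h1 : 1 / ((↑(j+3) : ℝ) - 1) ≤ 1 := by
      rw [div_le_one hmr0]; linarith
    linarith
  have hD0 : (0:ℝ) < D0 := by
    rw [hD0def]
    have := Real.log_nonneg ((one_le_div hL0).2 hLB)
    linarith
  have hCb : (0:ℝ) < 1 - a / B := by
    have : a / B < 1 := (div_lt_one hB).2 (lt_of_lt_of_le haL hLB)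
    linarith
  intro v hv z hz
  obtain ⟨hv1, hv2⟩ := hv
  have hv0 : 0 < v := lt_trans hL0 hv1
  have hav : a < v := lt_trans haL hv1
  have hva0 : (0:ℝ) < v - a := sub_pos.2 hav
  have hs0 : (0:ℝ) < 1 - a / v := by
    have : a / v < 1 := (div_lt_one hv0).2 hav
    linarith
  -- derivative of Qs at v
  have hdiv : HasDerivAt (fun r : ℝ => r / (r - a))
      ((1 * (v - a) - v * 1) / (v - a) ^ 2) v :=
    (hasDerivAt_id v).div ((hasDerivAt_id v).sub_const a) hva0.ne'
  have hpow : HasDerivAt (fun r : ℝ => (r / (r - a)) ^ (j+2))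
      ((↑(j+2) : ℝ) * (v / (v - a)) ^ (j+1) * ((1 * (v - a) - v * 1) / (v - a) ^ 2)) v :=
    hdiv.pow (j+2)
  have hlog1 : HasDerivAt (fun r : ℝ => r / L) (1 / L) v := (hasDerivAt_id v).div_const L
  have hlog : HasDerivAt (fun r : ℝ => Real.log (r / L)) ((v / L)⁻¹ * (1 / L)) v :=
    by have := (Real.hasDerivAt_log (div_ne_zero hv0.ne' hL0.ne')).comp v hlog1; exact this
  have hfun2 : HasDerivAt (fun r : ℝ => (K0 + Real.log (r / L)) / D0)
      (((v / L)⁻¹ * (1 / L)) / D0) v := (hlog.const_add K0).div_const D0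
  have hg : HasDerivAt (fun r : ℝ =>
      (1 - a / B) ^ (j+2) * (r / (r - a)) ^ (j+2) * ((K0 + Real.log (r / L)) / D0))
      ((1 - a / B) ^ (j+2) * ((↑(j+2) : ℝ) * (v / (v - a)) ^ (j+1)
          * ((1 * (v - a) - v * 1) / (v - a) ^ 2)) * ((K0 + Real.log (v / L)) / D0)
        + (1 - a / B) ^ (j+2) * (v / (v - a)) ^ (j+2) * (((v / L)⁻¹ * (1 / L)) / D0)) v :=
    (hpow.const_mul ((1 - a / B) ^ (j+2))).mul hfun2
  have hev : Qs =ᶠ[nhds v] (fun r : ℝ =>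
      (1 - a / B) ^ (j+2) * (r / (r - a)) ^ (j+2) * ((K0 + Real.log (r / L)) / D0)) := by
    filter_upwards [Ioi_mem_nhds hv1] with r hr
    rw [hQs r, if_neg (not_lt.2 (le_of_lt hr))]
  have hdQ : deriv Qs v
      = (1 - a / B) ^ (j+2) * ((↑(j+2) : ℝ) * (v / (v - a)) ^ (j+1)
          * ((1 * (v - a) - v * 1) / (v - a) ^ 2)) * ((K0 + Real.log (v / L)) / D0)
        + (1 - a / B) ^ (j+2) * (v / (v - a)) ^ (j+2) * (((v / L)⁻¹ * (1 / L)) / D0) :=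
    hev.deriv_eq.trans hg.deriv
  have hQv : Qs v = (1 - a / B) ^ (j+2) * (v / (v - a)) ^ (j+2)
      * ((K0 + Real.log (v / L)) / D0) := by
    rw [hQs v, if_neg (not_lt.2 (le_of_lt hv1))]
  -- the log bound
  have hlogb : 1 - L / v ≤ Real.log (v / L) := by
    have h1 : Real.log (L / v) ≤ L / v - 1 := Real.log_le_sub_one_of_pos (by positivity)
    have h2 : Real.log (v / L) = - Real.log (L / v) := by
      rw [← Real.log_inv, inv_div]
    linarith
  have hTb : ((↑(j+3) : ℝ) - 1) * (1 - a / v) ≤ K0 + Real.log (v / L) := by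
    have haa : a * ((↑(j+3) : ℝ) - 1) ^ 2 = L := by
      rw [ha]; exact div_mul_cancel₀ L (pow_ne_zero 2 hmr0.ne')
    have h5 : (a / v) * ((↑(j+3) : ℝ) - 1) ^ 2 = L / v := by
      rw [div_mul_eq_mul_div, haa]
    have hK0rel : K0 * ((↑(j+3) : ℝ) - 1) = ((↑(j+3) : ℝ) - 1) ^ 2 - 1 := by
      rw [hK0def, sub_mul, div_mul_cancel₀ 1 hmr0.ne']; ring
    have hq1 : L / v < 1 := (div_lt_one hv0).2 hv1
    have h6 : (0:ℝ) ≤ ((↑(j+3) : ℝ) - 1 - 1) * (1 - L / v) := by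
      apply mul_nonneg <;> linarith
    have goalC : ((↑(j+3) : ℝ) - 1) * (1 - a / v) ≤ K0 + 1 - L / v := by
      nlinarith [h5, hK0rel, h6, hmr0, hmr2]
    linarith [hlogb, goalC]
  -- apply bridge
  rw [hh v (1 - a / v), hh v z]
  refine bridge j ((↑(j+3) : ℝ)) ((1 - a / B) ^ (j+2) / D0) (1 - a / v)
    (K0 + Real.log (v / L)) z (v * deriv Qs v) (Qs v) lam
    (by push_cast; ring) (by positivity) hs0 hz.1 hTb ?_ ?_ ?_
  · rw [hdQ]
    have hx : (v/(v-a)) * (1 - a/v) = 1 := by field_simp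
    have hx1 : (v/(v-a))^(j+1) * (1-a/v)^(j+1) = 1 := by rw [← mul_pow, hx, one_pow]
    have hx2 : (v/(v-a))^(j+2) * (1-a/v)^(j+2) = 1 := by rw [← mul_pow, hx, one_pow]
    have hy : v * ((1 * (v - a) - v * 1) / (v - a) ^ 2) * (1 - a/v)^2 = -(a/v) := by field_simp; ring
    have hz : v * ((v / L)⁻¹ * (1 / L)) = 1 := by field_simp
    have e : (1 - a/v)^(j+3) = (1-a/v)^(j+1) * (1-a/v)^2 := by ring
    calc _ = (1 - a / B) ^ (j+2) / D0 * ((↑(j+2) : ℝ) * ((v / (v - a)) ^ (j+1) * (1-a/v)^(j+1))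
              * (v * ((1 * (v - a) - v * 1) / (v - a) ^ 2) * (1 - a/v)^2) * (K0 + Real.log (v / L))
            + ((v / (v - a)) ^ (j+2) * (1-a/v)^(j+2)) * (v * ((v / L)⁻¹ * (1 / L))) * (1 - a/v)) := by
              rw [e]; ring
      _ = _ := by rw [hx1, hx2, hy, hz]; push_cast; ring
  · rw [hQv]
    have hx : (v/(v-a)) * (1 - a/v) = 1 := by field_simp
    have hx2 : (v/(v-a))^(j+2) * (1-a/v)^(j+2) = 1 := by rw [← mul_pow, hx, one_pow]
    linear_combination ((1-a/B)^(j+2) * ((K0+Real.log (v/L))/D0)) * hx2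
  · rw [hlam]
    ring
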